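/- Let G be a stitched 2-ichromatic ordered graph with parts v_1, ..., v_m and v_{m+1}, ..., v_{m+n}, and suppose that v_1 v_{m+n} and v_m v_{m+1} are edges of G. Then R(G) ≥ 5r + 1, where r = min(m,n) - 1. -/

import Mathlib

/-- A `t`-edge-coloring `c` of the complete graph on the ordered vertex set `Fin N`
contains a monochromatic ordered copy of the ordered graph `G` on `Fin M`. -/
def HasMonoCopy {M N t : ℕ} (G : SimpleGraph (Fin M)) (c : Fin N → Fin N → Fin t) : Prop :=
  ∃ k : Fin t, ∃ f : Fin M → Fin N, StrictMono f ∧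
    ∀ u v : Fin M, u < v → G.Adj u v → c (f u) (f v) = k

/-- The `t`-color ordered Ramsey number of the ordered graph `G`: the least `N` such that
every `t`-coloring of the edges of the complete graph on `Fin N` contains a monochromatic
ordered copy of `G`. -/
noncomputable def orderedRamsey {M : ℕ} (t : ℕ) (G : SimpleGraph (Fin M)) : ℕ :=
  sInf {N : ℕ | ∀ c : Fin N → Fin N → Fin t, HasMonoCopy G c}

/-- An interval coloring of an ordered graph with `k` parts, encoded as a monotone
surjection onto `Fin k` whose fibers (the parts, which are intervals of consecutive
vertices) are independent sets. -/
def IsIntervalColoring {N k : ℕ} (G : SimpleGraph (Fin N)) (p : Fin N → Fin k) : Prop :=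
  Monotone p ∧ Function.Surjective p ∧ ∀ u v : Fin N, G.Adj u v → p u ≠ p v

/-- The interval chromatic number of an ordered graph. -/
noncomputable def intervalChromatic {N : ℕ} (G : SimpleGraph (Fin N)) : ℕ :=
  sInf {k : ℕ | ∃ p : Fin N → Fin k, IsIntervalColoring G p}

/-! ### Auxiliary material -/

/-- The block-pair coloring matrix used in the lower-bound construction. -/
def cbM : Fin 5 → Fin 5 → Fin 2 :=
  ![![0,0,0,0,1], ![0,1,1,0,0], ![0,0,1,1,0], ![0,0,0,1,0], ![0,0,0,0,0]]

/-- Component labels for left (A-side) blocks in the block bipartite graph of each color. -/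
def gM : Fin 2 → Fin 5 → Fin 4 := ![![0,0,0,0,0], ![0,1,1,1,2]]

/-- Component labels for right (B-side) blocks. -/
def hM : Fin 2 → Fin 5 → Fin 4 := ![![0,0,0,0,0], ![3,1,1,1,0]]

lemma cb_key : ∀ (k : Fin 2) (i j : Fin 5), i ≤ j → cbM i j = k → gM k i = hM k j := by decide

lemma cb_nokey : ∀ (k : Fin 2) (a1 a2 b1 b2 : Fin 5), a1 < a2 → a2 ≤ b1 → b1 < b2 →
    cbM a1 b2 = k → cbM a2 b1 = k → gM k a1 ≠ gM k a2 := by decide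

/-- A coloring contains a monochromatic (in color `k`) ordered set of size at least `p`. -/
def MonoSet {N : ℕ} (c : Fin N → Fin N → Fin 2) (k : Fin 2) (p : ℕ) : Prop :=
  ∃ s : Finset (Fin N), p ≤ s.card ∧ ∀ u ∈ s, ∀ v ∈ s, u < v → c u v = k

/-- Finite Ramsey theorem for two colors, in ordered form. -/
theorem ramsey2 : ∀ p q : ℕ, ∃ N : ℕ, ∀ c : Fin N → Fin N → Fin 2,
    MonoSet c 0 p ∨ MonoSet c 1 q
  | 0, _ => ⟨0, fun _ => Or.inl ⟨∅, by simp⟩⟩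
  | _ + 1, 0 => ⟨0, fun _ => Or.inr ⟨∅, by simp⟩⟩
  | p + 1, q + 1 => by
    obtain ⟨N1, h1⟩ := ramsey2 p (q + 1)
    obtain ⟨N2, h2⟩ := ramsey2 (p + 1) q
    refine ⟨N1 + N2 + 1, ?_⟩
    intro c
    have two : ∀ x : Fin 2, x = 0 ∨ x = 1 := by decide
    set z : Fin (N1 + N2 + 1) := ⟨0, by omega⟩ with hz
    set T0 : Finset (Fin (N1 + N2 + 1)) := Finset.univ.filter (fun v => z < v ∧ c z v = 0) with hT0
    set T1 : Finset (Fin (N1 + N2 + 1)) := Finset.univ.filter (fun v => z < v ∧ c z v = 1) with hT1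
    have hsub : Finset.univ.erase z ⊆ T0 ∪ T1 := by
      intro v hv
      have hne : v ≠ z := (Finset.mem_erase.mp hv).1
      have hlt : z < v := by
        have h0 : (v : ℕ) ≠ 0 := fun h => hne (Fin.ext h)
        have hz0 : (z : ℕ) = 0 := rfl
        exact Fin.lt_def.mpr (by omega)
      rcases two (c z v) with h | h
      · exact Finset.mem_union_left _ (Finset.mem_filter.mpr ⟨Finset.mem_univ _, hlt, h⟩)
      · exact Finset.mem_union_right _ (Finset.mem_filter.mpr ⟨Finset.mem_univ _, hlt, h⟩)
    have hcard : N1 + N2 ≤ T0.card + T1.card := by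
      have h1' : (Finset.univ.erase z).card = N1 + N2 := by
        rw [Finset.card_erase_of_mem (Finset.mem_univ _), Finset.card_univ, Fintype.card_fin]
        omega
      have h2' := Finset.card_le_card hsub
      have h3' := Finset.card_union_le T0 T1
      omega
    have hsplit : N1 ≤ T0.card ∨ N2 ≤ T1.card := by omega
    rcases hsplit with hc0 | hc1
    · obtain ⟨t, hts, htc⟩ := Finset.exists_subset_card_eq hc0
      set e := t.orderEmbOfFin htc with he
      have hmemT0 : ∀ i, z < e i ∧ c z (e i) = 0 := by
        intro i
        have : e i ∈ T0 := hts (t.orderEmbOfFin_mem htc i)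
        exact (Finset.mem_filter.mp this).2
      rcases h1 (fun u v => c (e u) (e v)) with ⟨s', hcard', hmono'⟩ | ⟨s', hcard', hmono'⟩
      · left
        refine ⟨insert z (s'.image ⇑e), ?_, ?_⟩
        · have hzn : z ∉ s'.image ⇑e := by
            simp only [Finset.mem_image]
            rintro ⟨i, -, hi⟩
            exact (ne_of_gt (hmemT0 i).1) hi
          rw [Finset.card_insert_of_notMem hzn,
            Finset.card_image_of_injective _ (fun a b hab => e.injective hab)]
          omega
        · intro u hu v hv huv
          rcases Finset.mem_insert.mp hu with rfl | hu
          · rcases Finset.mem_insert.mp hv with rfl | hv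
            · exact absurd huv (lt_irrefl _)
            · obtain ⟨i, -, rfl⟩ := Finset.mem_image.mp hv
              exact (hmemT0 i).2
          · obtain ⟨i, his, rfl⟩ := Finset.mem_image.mp hu
            rcases Finset.mem_insert.mp hv with rfl | hv
            · exact absurd huv (asymm (hmemT0 i).1)
            · obtain ⟨j, hjs, rfl⟩ := Finset.mem_image.mp hv
              exact hmono' i his j hjs (e.lt_iff_lt.mp huv)
      · right
        refine ⟨s'.image ⇑e, ?_, ?_⟩
        · rw [Finset.card_image_of_injective _ (fun a b hab => e.injective hab)]; omega
        · intro u hu v hv huv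
          obtain ⟨i, his, rfl⟩ := Finset.mem_image.mp hu
          obtain ⟨j, hjs, rfl⟩ := Finset.mem_image.mp hv
          exact hmono' i his j hjs (e.lt_iff_lt.mp huv)
    · obtain ⟨t, hts, htc⟩ := Finset.exists_subset_card_eq hc1
      set e := t.orderEmbOfFin htc with he
      have hmemT1 : ∀ i, z < e i ∧ c z (e i) = 1 := by
        intro i
        have : e i ∈ T1 := hts (t.orderEmbOfFin_mem htc i)
        exact (Finset.mem_filter.mp this).2
      rcases h2 (fun u v => c (e u) (e v)) with ⟨s', hcard', hmono'⟩ | ⟨s', hcard', hmono'⟩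
      · left
        refine ⟨s'.image ⇑e, ?_, ?_⟩
        · rw [Finset.card_image_of_injective _ (fun a b hab => e.injective hab)]; omega
        · intro u hu v hv huv
          obtain ⟨i, his, rfl⟩ := Finset.mem_image.mp hu
          obtain ⟨j, hjs, rfl⟩ := Finset.mem_image.mp hv
          exact hmono' i his j hjs (e.lt_iff_lt.mp huv)
      · right
        refine ⟨insert z (s'.image ⇑e), ?_, ?_⟩
        · have hzn : z ∉ s'.image ⇑e := by
            simp only [Finset.mem_image]
            rintro ⟨i, -, hi⟩
            exact (ne_of_gt (hmemT1 i).1) hi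
          rw [Finset.card_insert_of_notMem hzn,
            Finset.card_image_of_injective _ (fun a b hab => e.injective hab)]
          omega
        · intro u hu v hv huv
          rcases Finset.mem_insert.mp hu with rfl | hu
          · rcases Finset.mem_insert.mp hv with rfl | hv
            · exact absurd huv (lt_irrefl _)
            · obtain ⟨i, -, rfl⟩ := Finset.mem_image.mp hv
              exact (hmemT1 i).2
          · obtain ⟨i, his, rfl⟩ := Finset.mem_image.mp hu
            rcases Finset.mem_insert.mp hv with rfl | hv
            · exact absurd huv (asymm (hmemT1 i).1)
            · obtain ⟨j, hjs, rfl⟩ := Finset.mem_image.mp hv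
              exact hmono' i his j hjs (e.lt_iff_lt.mp huv)
  termination_by p q => p + q

/-- Every large enough complete ordered graph coloring contains a monochromatic copy
of any ordered graph. -/
theorem exists_ramsey_bound {M : ℕ} (G : SimpleGraph (Fin M)) :
    ∃ N : ℕ, ∀ c : Fin N → Fin N → Fin 2, HasMonoCopy G c := by
  obtain ⟨N, hN⟩ := ramsey2 M M
  refine ⟨N, fun c => ?_⟩
  have key : ∀ k : Fin 2, MonoSet c k M → HasMonoCopy G c := by
    rintro k ⟨s, hcard, hmono⟩
    obtain ⟨t, hts, htc⟩ := Finset.exists_subset_card_eq hcard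
    refine ⟨k, t.orderEmbOfFin htc, (t.orderEmbOfFin htc).strictMono, fun u v huv _ => ?_⟩
    exact hmono _ (hts (t.orderEmbOfFin_mem htc u)) _ (hts (t.orderEmbOfFin_mem htc v))
      ((t.orderEmbOfFin htc).strictMono huv)
  rcases hN c with h | h
  · exact key 0 h
  · exact key 1 h

lemma strictMono_gap {M N : ℕ} {f : Fin M → Fin N} (hf : StrictMono f) :
    ∀ (d : ℕ) (u v : Fin M), (u : ℕ) + d = (v : ℕ) → (f u : ℕ) + d ≤ (f v : ℕ) := by
  intro d
  induction d with
  | zero =>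
    intro u v h
    have : u = v := Fin.ext (by omega)
    subst this; simp
  | succ d ih =>
    intro u v h
    have hw : (u : ℕ) + d < M := by have := v.isLt; omega
    have h1 := ih u ⟨(u : ℕ) + d, hw⟩ rfl
    have h2 : f ⟨(u : ℕ) + d, hw⟩ < f v := hf (Fin.lt_def.mpr (by simp; omega))
    have h3 := Fin.lt_def.mp h2
    omega

lemma reachable_const {V β : Type*} (G : SimpleGraph V) (val : V → β)
    (h : ∀ u v, G.Adj u v → val u = val v) {u v : V} (hr : G.Reachable u v) :
    val u = val v := by
  obtain ⟨w⟩ := hr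
  induction w with
  | nil => rfl
  | cons ha p ih => exact (h _ _ ha).trans ih

/-- If `G` is a stitched 2-ichromatic ordered graph with parts `v_1,…,v_m` and
`v_{m+1},…,v_{m+n}` having edges `v_1 v_{m+n}` and `v_m v_{m+1}`, then
`R(G) ≥ 5r + 1` where `r = min(m,n) - 1`. -/
theorem stmt1 {m n : ℕ} (hm : 1 ≤ m) (hn : 1 ≤ n)
    (G : SimpleGraph (Fin (m + n)))
    (hichrom : intervalChromatic G = 2)
    (hpart1 : ∀ u v : Fin (m + n), (u : ℕ) < m → (v : ℕ) < m → ¬ G.Adj u v)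
    (hpart2 : ∀ u v : Fin (m + n), m ≤ (u : ℕ) → m ≤ (v : ℕ) → ¬ G.Adj u v)
    (hstitched : G.Reachable ⟨0, by omega⟩ ⟨m - 1, by omega⟩ ∧
      G.Reachable ⟨0, by omega⟩ ⟨m, by omega⟩ ∧
      G.Reachable ⟨0, by omega⟩ ⟨m + n - 1, by omega⟩)
    (hedge1 : G.Adj ⟨0, by omega⟩ ⟨m + n - 1, by omega⟩)
    (hedge2 : G.Adj ⟨m - 1, by omega⟩ ⟨m, by omega⟩) :
    5 * (min m n - 1) + 1 ≤ orderedRamsey 2 G := by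
  set r := min m n - 1 with hrdef
  rw [orderedRamsey]
  obtain ⟨N0, hN0⟩ := exists_ramsey_bound G
  refine le_csInf ⟨N0, hN0⟩ ?_
  rintro b hb
  simp only [Set.mem_setOf_eq] at hb
  by_contra hcon
  push_neg at hcon
  have hble : b ≤ 5 * r := by omega
  rcases Nat.eq_zero_or_pos r with hr0 | hr1
  · have hb0 : b = 0 := by omega
    subst hb0
    obtain ⟨k, f, -, -⟩ := hb (fun _ _ => 0)
    exact (f ⟨0, by omega⟩).elim0
  · have hm' : r + 1 ≤ m := by omega
    have hn' : r + 1 ≤ n := by omega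
    have hblkP : ∀ x : Fin b, (x : ℕ) / r < 5 :=
      fun x => Nat.div_lt_of_lt_mul (by have := x.isLt; omega)
    set blk : Fin b → Fin 5 := fun x => ⟨(x : ℕ) / r, hblkP x⟩ with hblk
    obtain ⟨k, f, hf, hc⟩ := hb (fun x y => cbM (blk x) (blk y))
    have blk_lt : ∀ x y : Fin b, (x : ℕ) + r ≤ (y : ℕ) → blk x < blk y := by
      intro x y hxy
      have h1 : ((x : ℕ) + r) / r ≤ (y : ℕ) / r := Nat.div_le_div_right hxy
      rw [Nat.add_div_right _ hr1] at h1
      exact Fin.lt_def.mpr (by simp only [hblk]; omega)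
    have blk_le : ∀ x y : Fin b, x ≤ y → blk x ≤ blk y := by
      intro x y hxy
      exact Fin.le_def.mpr (by simp only [hblk]; exact Nat.div_le_div_right hxy)
    have ha12 : blk (f ⟨0, by omega⟩) < blk (f ⟨m - 1, by omega⟩) := by
      refine blk_lt _ _ ?_
      have := strictMono_gap hf (m - 1) ⟨0, by omega⟩ ⟨m - 1, by omega⟩
        (show 0 + (m - 1) = m - 1 by omega)
      omega
    have ha2b1 : blk (f ⟨m - 1, by omega⟩) ≤ blk (f ⟨m, by omega⟩) := by
      refine blk_le _ _ (le_of_lt (hf ?_))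
      exact Fin.mk_lt_mk.mpr (by omega)
    have hb12 : blk (f ⟨m, by omega⟩) < blk (f ⟨m + n - 1, by omega⟩) := by
      refine blk_lt _ _ ?_
      have := strictMono_gap hf (n - 1) ⟨m, by omega⟩ ⟨m + n - 1, by omega⟩
        (show m + (n - 1) = m + n - 1 by omega)
      omega
    have hcb1 : cbM (blk (f ⟨0, by omega⟩)) (blk (f ⟨m + n - 1, by omega⟩)) = k :=
      hc _ _ (Fin.mk_lt_mk.mpr (by omega)) hedge1
    have hcb2 : cbM (blk (f ⟨m - 1, by omega⟩)) (blk (f ⟨m, by omega⟩)) = k :=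
      hc _ _ (Fin.mk_lt_mk.mpr (by omega)) hedge2
    have hval : ∀ u v : Fin (m + n), G.Adj u v →
        (if (u : ℕ) < m then gM k (blk (f u)) else hM k (blk (f u)))
          = (if (v : ℕ) < m then gM k (blk (f v)) else hM k (blk (f v))) := by
      intro u v hadj
      by_cases hu : (u : ℕ) < m <;> by_cases hv : (v : ℕ) < m
      · exact absurd hadj (hpart1 u v hu hv)
      · have huv : u < v := Fin.lt_def.mpr (by omega)
        have hk := hc u v huv hadj
        have hle : blk (f u) ≤ blk (f v) := blk_le _ _ (le_of_lt (hf huv))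
        have := cb_key k _ _ hle hk
        rw [if_pos hu, if_neg hv]
        exact this
      · have huv : v < u := Fin.lt_def.mpr (by omega)
        have hk := hc v u huv hadj.symm
        have hle : blk (f v) ≤ blk (f u) := blk_le _ _ (le_of_lt (hf huv))
        have := cb_key k _ _ hle hk
        rw [if_neg hu, if_pos hv]
        exact this.symm
      · exact absurd hadj (hpart2 u v (by omega) (by omega))
    have hwalk : gM k (blk (f (⟨0, by omega⟩ : Fin (m + n))))
        = gM k (blk (f (⟨m - 1, by omega⟩ : Fin (m + n)))) := by
      have h := reachable_const G
        (fun u => if (u : ℕ) < m then gM k (blk (f u)) else hM k (blk (f u))) hval hstitched.1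
      simp only [] at h
      rwa [if_pos (show (0 : ℕ) < m by omega), if_pos (show m - 1 < m by omega)] at h
    exact cb_nokey k _ _ _ _ ha12 ha2b1 hb12 hcb1 hcb2 hwalk
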